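/- For every integer k ≥ 1 with k ≡ 1 (mod 6), there exists a finite simple graph G with maximum degree at most 3 and with exactly (13/6)(k−1) vertices such that every induced subgraph H of G has rep(H) ≤ k−1, i.e., in every induced subgraph no degree value is attained by more than k−1 vertices. (Equivalently, g(k,3) ≥ (13/6)(k−1) for infinitely many k. A witnessing graph is the disjoint union of (k−1)/6 copies of each of: a single vertex K_1, an edge K_2, the path P_4 on four vertices, and the complement of the 6-cycle C_6.) -/

import Mathlib

/-- The degree of a vertex: the number of its neighbors (graph on a finite type). -/
noncomputable def ndeg {V : Type*} (G : SimpleGraph V) (v : V) : ℕ :=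
  (G.neighborSet v).ncard

/-- The number of vertices of `G` whose degree equals `j`. -/
noncomputable def repCount {V : Type*} (G : SimpleGraph V) (j : ℕ) : ℕ :=
  {v : V | ndeg G v = j}.ncard



def pairsList : List (ℕ × ℕ) :=
  [(1,2),(3,4),(4,5),(5,6),(7,8),(8,9),(7,9),(10,11),(11,12),(10,12),(7,10),(8,11),(9,12)]

def badjB (a b : ℕ) : Bool :=
  decide ((a, b) ∈ pairsList) || decide ((b, a) ∈ pairsList)

def badj13 : Fin 13 → Fin 13 → Bool := fun a b => badjB a.1 b.1

def gdeg {α : Type*} [DecidableEq α] (adj : α → α → Bool) (t : Finset α) (a : α) : ℕ :=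
  (t.filter fun b => adj a b).card

def emb13 (p off : ℕ) (h : p + off ≤ 13) : Fin p ↪ Fin 13 :=
  ⟨fun a => ⟨a.1 + off, by omega⟩, by
    intro a b hab
    have := congrArg Fin.val hab
    simp at this
    exact Fin.ext this⟩

def e0 : Fin 1 ↪ Fin 13 := emb13 1 0 (by norm_num)
def e1 : Fin 2 ↪ Fin 13 := emb13 2 1 (by norm_num)
def e2 : Fin 4 ↪ Fin 13 := emb13 4 3 (by norm_num)
def e3 : Fin 6 ↪ Fin 13 := emb13 6 7 (by norm_num)

def bnd : ℕ → ℕ → ℕ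
  | 0, 0 => 1
  | 1, 0 => 1 | 1, 1 => 2
  | 2, 0 => 2 | 2, 1 => 2 | 2, 2 => 2
  | 3, 0 => 2 | 3, 1 => 2 | 3, 2 => 4 | 3, 3 => 6
  | _, _ => 0

def cidx : ℕ → ℕ := fun r => if r = 0 then 0 else if r ≤ 2 then 1 else if r ≤ 6 then 2 else 3

lemma compLem0 : ∀ u : Finset (Fin 1), ∀ j ∈ Finset.range 4,
    (u.filter (fun a => gdeg (fun a b => badj13 (e0 a) (e0 b)) u a = j)).card ≤ bnd 0 j := by decide
lemma compLem1 : ∀ u : Finset (Fin 2), ∀ j ∈ Finset.range 4,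
    (u.filter (fun a => gdeg (fun a b => badj13 (e1 a) (e1 b)) u a = j)).card ≤ bnd 1 j := by decide
lemma compLem2 : ∀ u : Finset (Fin 4), ∀ j ∈ Finset.range 4,
    (u.filter (fun a => gdeg (fun a b => badj13 (e2 a) (e2 b)) u a = j)).card ≤ bnd 2 j := by decide
set_option maxRecDepth 10000 in
lemma compLem3 : ∀ u : Finset (Fin 6), ∀ j ∈ Finset.range 4,
    (u.filter (fun a => gdeg (fun a b => badj13 (e3 a) (e3 b)) u a = j)).card ≤ bnd 3 j := by decide

lemma mem_comp0 : ∀ a : Fin 13, cidx a.1 = 0 → a ∈ Finset.univ.map e0 := by decide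
lemma mem_comp1 : ∀ a : Fin 13, cidx a.1 = 1 → a ∈ Finset.univ.map e1 := by decide
lemma mem_comp2 : ∀ a : Fin 13, cidx a.1 = 2 → a ∈ Finset.univ.map e2 := by decide
lemma mem_comp3 : ∀ a : Fin 13, cidx a.1 = 3 → a ∈ Finset.univ.map e3 := by decide

lemma adj_cidx : ∀ a b : Fin 13, badj13 a b → cidx a.1 = cidx b.1 := by decide

lemma deg3 : ∀ a : Fin 13, gdeg badj13 Finset.univ a ≤ 3 := by decide

lemma transfer {α β : Type*} [DecidableEq α] [DecidableEq β] (adj : α → α → Bool)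
    (e : β ↪ α) (w : Finset β) (j : ℕ) :
    ((w.map e).filter (fun x => gdeg adj (w.map e) x = j)).card
      = (w.filter (fun a => gdeg (fun a b => adj (e a) (e b)) w a = j)).card := by
  have hdeg : ∀ a : β, gdeg adj (w.map e) (e a) = gdeg (fun a b => adj (e a) (e b)) w a := by
    intro a
    unfold gdeg
    rw [Finset.filter_map, Finset.card_map]
    rfl
  rw [Finset.filter_map, Finset.card_map]
  apply Finset.card_bij (fun a _ => a)
  · intro a ha
    simp only [Finset.mem_filter, Function.comp] at ha ⊢
    exact ⟨ha.1, by rw [← hdeg a]; exact ha.2⟩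
  · intro a _ b _ h; exact h
  · intro a ha
    simp only [Finset.mem_filter, Function.comp] at ha ⊢
    exact ⟨a, ⟨ha.1, by rw [hdeg a]; exact ha.2⟩, rfl⟩

lemma fiber_bound_of {p : ℕ} (e : Fin p ↪ Fin 13) (ti : Finset (Fin 13))
    (hsub : ti ⊆ Finset.univ.map e) (j B : ℕ)
    (hcomp : ∀ u : Finset (Fin p),
      (u.filter (fun a => gdeg (fun a b => badj13 (e a) (e b)) u a = j)).card ≤ B) :
    (ti.filter (fun a => gdeg badj13 ti a = j)).card ≤ B := by
  obtain ⟨w, -, rfl⟩ := Finset.subset_map_iff.mp hsub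
  rw [transfer]
  exact hcomp w

lemma gdeg_le3 (t : Finset (Fin 13)) (a : Fin 13) : gdeg badj13 t a ≤ 3 := by
  refine le_trans ?_ (deg3 a)
  exact Finset.card_le_card (Finset.filter_subset_filter _ (Finset.subset_univ t))

lemma cidx_lt4 (r : ℕ) : cidx r < 4 := by
  simp only [cidx]
  split
  · omega
  · split
    · omega
    · split <;> omega

lemma fiberLem (j i : ℕ) (hj : j < 4) (hi : i < 4) (ti : Finset (Fin 13))
    (hmem : ∀ a ∈ ti, cidx a.1 = i) :
    (ti.filter (fun a => gdeg badj13 ti a = j)).card ≤ bnd i j := by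
  have hj4 : j ∈ Finset.range 4 := Finset.mem_range.mpr hj
  interval_cases i
  · exact fiber_bound_of e0 ti (fun a ha => mem_comp0 a (hmem a ha)) j _
      (fun u => compLem0 u j hj4)
  · exact fiber_bound_of e1 ti (fun a ha => mem_comp1 a (hmem a ha)) j _
      (fun u => compLem1 u j hj4)
  · exact fiber_bound_of e2 ti (fun a ha => mem_comp2 a (hmem a ha)) j _
      (fun u => compLem2 u j hj4)
  · exact fiber_bound_of e3 ti (fun a ha => mem_comp3 a (hmem a ha)) j _
      (fun u => compLem3 u j hj4)

lemma blockLemma (t : Finset (Fin 13)) (j : ℕ) :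
    (t.filter (fun a => gdeg badj13 t a = j)).card ≤ 6 := by
  by_cases hj : j < 4
  · have hfib : ∀ a ∈ t.filter (fun a => gdeg badj13 t a = j), cidx a.1 ∈ Finset.range 4 :=
      fun a _ => Finset.mem_range.mpr (cidx_lt4 a.1)
    rw [Finset.card_eq_sum_card_fiberwise hfib]
    have key : ∀ i ∈ Finset.range 4,
        (Finset.filter (fun a => cidx a.1 = i) (t.filter (fun a => gdeg badj13 t a = j))).card
          ≤ bnd i j := by
      intro i hi
      have hsub : Finset.filter (fun a => cidx a.1 = i) (t.filter (fun a => gdeg badj13 t a = j))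
          ⊆ (t.filter (fun a => cidx a.1 = i)).filter
              (fun a => gdeg badj13 (t.filter (fun a => cidx a.1 = i)) a = j) := by
        intro a ha
        simp only [Finset.mem_filter] at ha ⊢
        obtain ⟨⟨hat, hdeg⟩, hci⟩ := ha
        have hfilt : (t.filter (fun a => cidx a.1 = i)).filter (fun b => badj13 a b)
            = t.filter (fun b => badj13 a b) := by
          ext b
          simp only [Finset.mem_filter]
          constructor
          · rintro ⟨⟨hb, -⟩, hadj⟩; exact ⟨hb, hadj⟩
          · rintro ⟨hb, hadj⟩
            exact ⟨⟨hb, by rw [← adj_cidx a b hadj, hci]⟩, hadj⟩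
        refine ⟨⟨hat, hci⟩, ?_⟩
        unfold gdeg at hdeg ⊢
        rw [hfilt]
        exact hdeg
      refine le_trans (Finset.card_le_card hsub) ?_
      exact fiberLem j i hj (Finset.mem_range.mp hi) _
        (fun a ha => (Finset.mem_filter.mp ha).2)
    refine le_trans (Finset.sum_le_sum key) ?_
    rw [Finset.sum_range_succ, Finset.sum_range_succ, Finset.sum_range_succ,
      Finset.sum_range_succ, Finset.sum_range_zero]
    interval_cases j <;> simp [bnd]
  · have : t.filter (fun a => gdeg badj13 t a = j) = ∅ := by
      apply Finset.filter_false_of_mem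
      intro a _
      have := gdeg_le3 t a
      omega
    simp [this]

lemma badjB_symm (a b : ℕ) : badjB a b = badjB b a := by
  unfold badjB; exact Bool.or_comm _ _

lemma badjB_irrefl (a : ℕ) : ¬ badjB a a := by
  simp [badjB, pairsList, Prod.ext_iff]
  omega

def blockGraph (n : ℕ) : SimpleGraph (Fin n) where
  Adj v w := v.1 / 13 = w.1 / 13 ∧ badjB (v.1 % 13) (w.1 % 13) = true
  symm := by
    refine ⟨?_⟩
    intro v w h
    exact ⟨h.1.symm, by rw [badjB_symm]; exact h.2⟩
  loopless := by
    refine ⟨?_⟩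
    intro v h
    exact badjB_irrefl _ h.2

def g13 {n : ℕ} (v : Fin n) : Fin 13 := ⟨v.1 % 13, Nat.mod_lt _ (by norm_num)⟩

lemma blockGraph_deg {n : ℕ} (v : Fin n) : ndeg (blockGraph n) v ≤ 3 := by
  have hinj : Set.InjOn g13 ((blockGraph n).neighborSet v) := by
    intro w1 h1 w2 h2 he
    have e1 : w1.1 / 13 = v.1 / 13 := h1.1.symm
    have e2 : w2.1 / 13 = v.1 / 13 := h2.1.symm
    have e3 : w1.1 % 13 = w2.1 % 13 := congrArg Fin.val he
    exact Fin.ext (by omega)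
  have hsub : g13 '' ((blockGraph n).neighborSet v)
      ⊆ ↑(Finset.univ.filter fun b : Fin 13 => badj13 (g13 v) b) := by
    rintro b ⟨w, hw, rfl⟩
    simp only [Finset.coe_filter, Finset.mem_univ, Set.mem_setOf_eq, true_and]
    exact hw.2
  calc ndeg (blockGraph n) v = (g13 '' ((blockGraph n).neighborSet v)).ncard :=
        (Set.ncard_image_of_injOn hinj).symm
    _ ≤ (↑(Finset.univ.filter fun b : Fin 13 => badj13 (g13 v) b) : Set (Fin 13)).ncard :=
        Set.ncard_le_ncard hsub (Finset.finite_toSet _)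
    _ = gdeg badj13 Finset.univ (g13 v) := Set.ncard_coe_finset _
    _ ≤ 3 := deg3 _

lemma induce_adj' {n : ℕ} (G : SimpleGraph (Fin n)) (s : Set (Fin n)) (x y : ↥s) :
    (G.induce s).Adj x y ↔ G.Adj x.1 y.1 := Iff.rfl

lemma main_bound (m : ℕ) (s : Set (Fin (13 * m))) (j : ℕ) :
    repCount ((blockGraph (13 * m)).induce s) j ≤ 6 * m := by
  classical
  set G := blockGraph (13 * m) with hGdef
  have h1 : repCount (G.induce s) j
      = {v : Fin (13 * m) | ∃ h : v ∈ s, ndeg (G.induce s) ⟨v, h⟩ = j}.ncard := by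
    unfold repCount
    rw [← Set.ncard_image_of_injective _ (Subtype.val_injective (p := (· ∈ s)))]
    congr 1
    rw [Subtype.coe_image]
    rfl
  rw [h1]
  set A := {v : Fin (13 * m) | ∃ h : v ∈ s, ndeg (G.induce s) ⟨v, h⟩ = j} with hAdef
  have hA : A.Finite := Set.toFinite A
  rw [Set.ncard_eq_toFinset_card A hA]
  set F := hA.toFinset with hFdef
  have hmemF : ∀ v : Fin (13 * m), v ∈ F ↔ ∃ h : v ∈ s, ndeg (G.induce s) ⟨v, h⟩ = j := by
    intro v; rw [hFdef, Set.Finite.mem_toFinset]; rfl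
  -- degree transfer
  have hdegtr : ∀ (q : ℕ) (hqn : ∀ a : Fin 13, 13 * q + a.1 < 13 * m)
      (v : Fin (13 * m)) (hv : v ∈ s) (hvq : v.1 / 13 = q),
      ndeg (G.induce s) ⟨v, hv⟩
        = gdeg badj13
            (Finset.univ.filter fun a : Fin 13 => (⟨13 * q + a.1, hqn a⟩ : Fin (13 * m)) ∈ s)
            (g13 v) := by
    intro q hqn v hv hvq
    set tq := Finset.univ.filter
      (fun a : Fin 13 => (⟨13 * q + a.1, hqn a⟩ : Fin (13 * m)) ∈ s) with htq
    have hWN : Subtype.val '' ((G.induce s).neighborSet ⟨v, hv⟩)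
        = {w : Fin (13 * m) | w ∈ s ∧ G.Adj v w} := by
      ext w
      simp only [Set.mem_image, SimpleGraph.mem_neighborSet, Set.mem_setOf_eq, induce_adj']
      constructor
      · rintro ⟨y, hy, rfl⟩
        exact ⟨y.2, hy⟩
      · rintro ⟨hws, hadj⟩
        exact ⟨⟨w, hws⟩, hadj, rfl⟩
    set W := {w : Fin (13 * m) | w ∈ s ∧ G.Adj v w} with hW
    have hinjW : Set.InjOn g13 W := by
      rintro w1 ⟨-, h1⟩ w2 ⟨-, h2⟩ he
      have e1 : w1.1 / 13 = v.1 / 13 := h1.1.symm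
      have e2 : w2.1 / 13 = v.1 / 13 := h2.1.symm
      have e3 : w1.1 % 13 = w2.1 % 13 := congrArg Fin.val he
      exact Fin.ext (by omega)
    have himg : g13 '' W = ↑(tq.filter fun b => badj13 (g13 v) b) := by
      ext b
      simp only [hW, Set.mem_image, Finset.coe_filter, Set.mem_setOf_eq, htq,
        Finset.mem_filter, Finset.mem_univ, true_and]
      constructor
      · rintro ⟨w, ⟨hws, hadj⟩, rfl⟩
        have hwq : w.1 / 13 = q := by rw [← hadj.1]; exact hvq
        have hwe : (⟨13 * q + (g13 w).1, hqn (g13 w)⟩ : Fin (13 * m)) = w := by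
          apply Fin.ext
          show 13 * q + w.1 % 13 = w.1
          omega
        exact ⟨by rw [hwe]; exact hws, hadj.2⟩
      · rintro ⟨hbs, hadj⟩
        have hb13 : b.1 < 13 := b.isLt
        refine ⟨⟨13 * q + b.1, hqn b⟩, ⟨hbs, ⟨?_, ?_⟩⟩, ?_⟩
        · show v.1 / 13 = (13 * q + b.1) / 13
          omega
        · show badjB (v.1 % 13) ((13 * q + b.1) % 13) = true
          have : (13 * q + b.1) % 13 = b.1 := by omega
          rw [this]
          exact hadj
        · apply Fin.ext
          show (13 * q + b.1) % 13 = b.1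
          omega
    calc ndeg (G.induce s) ⟨v, hv⟩
        = (Subtype.val '' ((G.induce s).neighborSet ⟨v, hv⟩)).ncard :=
          (Set.ncard_image_of_injective _ Subtype.val_injective).symm
      _ = W.ncard := by rw [hWN]
      _ = (g13 '' W).ncard := (Set.ncard_image_of_injOn hinjW).symm
      _ = (↑(tq.filter fun b => badj13 (g13 v) b) : Set (Fin 13)).ncard := by rw [himg]
      _ = gdeg badj13 tq (g13 v) := Set.ncard_coe_finset _
  -- fiberwise counting
  have hfib : ∀ v ∈ F, v.1 / 13 ∈ Finset.range m := by
    intro v _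
    have := v.isLt
    simp only [Finset.mem_range]
    omega
  rw [Finset.card_eq_sum_card_fiberwise hfib]
  have key : ∀ q ∈ Finset.range m, (F.filter fun v => v.1 / 13 = q).card ≤ 6 := by
    intro q hq
    have hq' : q < m := Finset.mem_range.mp hq
    have hqn : ∀ a : Fin 13, 13 * q + a.1 < 13 * m := by
      intro a; have := a.isLt; omega
    set tq := Finset.univ.filter
      (fun a : Fin 13 => (⟨13 * q + a.1, hqn a⟩ : Fin (13 * m)) ∈ s) with htq
    have hle : (F.filter fun v => v.1 / 13 = q).card
        ≤ (tq.filter fun a => gdeg badj13 tq a = j).card := by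
      apply Finset.card_le_card_of_injOn g13
      · intro v hvf
        simp only [Finset.mem_coe, Finset.mem_filter] at hvf
        obtain ⟨hvF, hvq⟩ := hvf
        obtain ⟨hvs, hdeg⟩ := (hmemF v).mp hvF
        have hve : (⟨13 * q + (g13 v).1, hqn (g13 v)⟩ : Fin (13 * m)) = v := by
          apply Fin.ext
          show 13 * q + v.1 % 13 = v.1
          omega
        simp only [Finset.mem_coe, Finset.mem_filter, htq, Finset.mem_univ, true_and]
        refine ⟨by rw [hve]; exact hvs, ?_⟩
        rw [← htq, ← hdegtr q hqn v hvs hvq]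
        exact hdeg
      · intro v1 h1 v2 h2 he
        simp only [Finset.coe_filter, Set.mem_setOf_eq] at h1 h2
        have e3 : v1.1 % 13 = v2.1 % 13 := congrArg Fin.val he
        have e1 := h1.2
        have e2 := h2.2
        exact Fin.ext (by omega)
    exact le_trans hle (blockLemma tq j)
  calc ∑ q ∈ Finset.range m, (F.filter fun v => v.1 / 13 = q).card
      ≤ ∑ _q ∈ Finset.range m, 6 := Finset.sum_le_sum key
    _ = 6 * m := by rw [Finset.sum_const, Finset.card_range, smul_eq_mul]; ring


/-- For every `k ≡ 1 (mod 6)` there is a graph with maximum degree at most `3` and exactly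
`(13/6)(k-1)` vertices in which every induced subgraph has every degree value attained by at
most `k-1` vertices, i.e. `g(k,3) ≥ (13/6)(k-1)` for infinitely many `k`. -/
theorem stmt_5 (k : ℕ) (hk : 1 ≤ k) (hk6 : k % 6 = 1) :
    ∃ (n : ℕ) (G : SimpleGraph (Fin n)),
      (∀ v, ndeg G v ≤ 3) ∧
      6 * n = 13 * (k - 1) ∧
      ∀ (s : Set (Fin n)) (j : ℕ), repCount (G.induce s) j ≤ k - 1 := by
  have hm : 6 * ((k - 1) / 6) = k - 1 := by omega
  refine ⟨13 * ((k - 1) / 6), blockGraph _, fun v => blockGraph_deg v, by omega, ?_⟩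
  intro s j
  calc repCount ((blockGraph _).induce s) j ≤ 6 * ((k - 1) / 6) := main_bound _ s j
    _ = k - 1 := hm
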